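/- Let r, s be coprime nonzero integers with r^2+4s ≠ 0, let α, β be the two roots of x^2 - rx - s = 0 with |α| ≥ |β|, and assume α/β is not a root of unity. Let U_0 = 0, U_1 = 1, U_{n+2} = r·U_{n+1} + s·U_n. Suppose n ≥ 150 and |U_n| = m_1!·m_2!⋯m_k! with 1 < m_1 ≤ ⋯ ≤ m_k. Then n·log|α| ≥ Σ_{i : m_i ≥ n-1} m_i·(log m_i − 1). -/

import Mathlib

private lemma two_pow_le_factorial_mul_exp (m : ℕ) (hm : 1 ≤ m) :
    2 * (m : ℝ) ^ m ≤ (Nat.factorial m : ℝ) * Real.exp 1 ^ m := by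
  induction m with
  | zero => omega
  | succ m ih =>
    rcases Nat.eq_or_lt_of_le hm with h | h
    · have hm0 : m = 0 := by omega
      subst hm0
      norm_num [Nat.factorial]
      nlinarith [Real.add_one_le_exp (1 : ℝ)]
    · have hm1 : 1 ≤ m := by omega
      have ih' := ih hm1
      have hmpos : (0:ℝ) < m := by exact_mod_cast Nat.pos_of_ne_zero (by omega)
      have key : ((m:ℝ)+1)^m ≤ (m:ℝ)^m * Real.exp 1 := by
        have h1 : (m:ℝ)+1 ≤ m * Real.exp (1/m) := by
          have hx := mul_le_mul_of_nonneg_left (Real.add_one_le_exp (1/(m:ℝ))) hmpos.le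
          have hy : (m:ℝ) * (1/m) = 1 := by field_simp
          nlinarith
        calc ((m:ℝ)+1)^m ≤ ((m:ℝ) * Real.exp (1/m))^m :=
              pow_le_pow_left₀ (by positivity) h1 m
          _ = (m:ℝ)^m * Real.exp (1/m) ^ m := mul_pow _ _ _
          _ = (m:ℝ)^m * Real.exp 1 := by
              rw [← Real.exp_nat_mul]
              congr 1
              field_simp
      have goal' : 2 * ((m:ℝ)+1)^(m+1) ≤ ((Nat.factorial (m+1) : ℝ)) * Real.exp 1 ^ (m+1) := by
        calc 2 * ((m:ℝ)+1)^(m+1)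
            = (2 * ((m:ℝ)+1)^m) * ((m:ℝ)+1) := by ring
          _ ≤ (2 * ((m:ℝ)^m * Real.exp 1)) * ((m:ℝ)+1) := by
              have h0 : (0:ℝ) ≤ (m:ℝ)+1 := by positivity
              gcongr
          _ = (2 * (m:ℝ)^m) * (Real.exp 1 * ((m:ℝ)+1)) := by ring
          _ ≤ ((Nat.factorial m : ℝ) * Real.exp 1 ^ m) * (Real.exp 1 * ((m:ℝ)+1)) := by
              have h0 : (0:ℝ) ≤ Real.exp 1 * ((m:ℝ)+1) := by positivity
              gcongr
          _ = (Nat.factorial (m+1) : ℝ) * Real.exp 1 ^ (m+1) := by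
              rw [Nat.factorial_succ]
              push_cast
              ring
      push_cast
      push_cast at goal'
      convert goal' using 2

/-- If `n ≥ 150` and `|U n| = m₁! ⋯ m_k!` with `1 < m₁ ≤ ⋯ ≤ m_k`, then
`n log |α| ≥ Σ_{i : mᵢ ≥ n-1} mᵢ (log mᵢ − 1)`. -/
theorem lucas_factorial_sum_upper_bound
    (r s : ℤ) (hr : r ≠ 0) (hs : s ≠ 0) (hrs : IsCoprime r s)
    (hdisc : r ^ 2 + 4 * s ≠ 0)
    (α β : ℂ) (hsum : α + β = (r : ℂ)) (hprod : α * β = -(s : ℂ))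
    (habs : ‖β‖ ≤ ‖α‖)
    (hnru : ∀ k : ℕ, 0 < k → (α / β) ^ k ≠ 1)
    (U : ℕ → ℤ) (hU0 : U 0 = 0) (hU1 : U 1 = 1)
    (hUrec : ∀ n : ℕ, U (n + 2) = r * U (n + 1) + s * U n)
    (n : ℕ) (hn : 150 ≤ n)
    (k : ℕ) (hk : 1 ≤ k) (m : Fin k → ℕ)
    (hm1 : ∀ i, 1 < m i) (hmono : Monotone m)
    (hfac : (U n).natAbs = ∏ i, Nat.factorial (m i)) :
    ∑ i ∈ Finset.univ.filter (fun i => n - 1 ≤ m i),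
        (m i : ℝ) * (Real.log (m i) - 1) ≤ n * Real.log ‖α‖ := by
  -- |α| ≥ 1
  have hs1 : (1:ℝ) ≤ ‖α‖ * ‖β‖ := by
    rw [← norm_mul, hprod]
    have : (1:ℤ) ≤ |s| := Int.one_le_abs hs
    calc (1:ℝ) ≤ |(s:ℝ)| := by exact_mod_cast this
      _ = ‖-(s:ℂ)‖ := by
          rw [norm_neg, Complex.norm_intCast]
  have habsα : (1:ℝ) ≤ ‖α‖ := by
    nlinarith [norm_nonneg α, norm_nonneg β]
  -- discriminant and α - β
  have hd : (α - β)^2 = ((r^2 + 4*s : ℤ) : ℂ) := by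
    push_cast
    linear_combination (α + β + (r:ℂ)) * hsum - 4 * hprod
  have hαβ : (1:ℝ) ≤ ‖α - β‖ := by
    have h1 : (1:ℤ) ≤ |r^2 + 4*s| := Int.one_le_abs hdisc
    have h2 : ‖α - β‖ ^ 2 = |((r^2+4*s : ℤ):ℝ)| := by
      rw [← norm_pow, hd, Complex.norm_intCast]
    have h3 : (1:ℝ) ≤ ‖α - β‖ ^ 2 := by
      rw [h2]; exact_mod_cast h1
    nlinarith [norm_nonneg (α - β)]
  -- Binet
  have binet : ∀ j : ℕ, (α - β) * (U j : ℂ) = α ^ j - β ^ j := by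
    have hr' : (r:ℂ) = α + β := hsum.symm
    have hs' : (s:ℂ) = -(α*β) := by linear_combination hprod
    have key : ∀ j : ℕ, (α - β) * (U j : ℂ) = α ^ j - β ^ j ∧
        (α - β) * (U (j+1) : ℂ) = α ^ (j+1) - β ^ (j+1) := by
      intro j
      induction j with
      | zero => constructor <;> simp [hU0, hU1]
      | succ j ih =>
        refine ⟨ih.2, ?_⟩
        rw [hUrec j]
        push_cast
        rw [hr', hs']
        linear_combination (α + β) * ih.2 - α * β * ih.1
    exact fun j => (key j).1
  -- |U n| ≤ 2 |α|^n
  have hUbound : ((U n).natAbs : ℝ) ≤ 2 * ‖α‖ ^ n := by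
    have h1 : ‖α - β‖ * ‖((U n : ℤ) : ℂ)‖ =
        ‖α ^ n - β ^ n‖ := by
      rw [← norm_mul, binet n]
    have h2 : ‖((U n : ℤ) : ℂ)‖ ≤ ‖α ^ n - β ^ n‖ := by
      nlinarith [norm_nonneg ((U n : ℤ) : ℂ)]
    have h3 : ‖α ^ n - β ^ n‖ ≤ 2 * ‖α‖ ^ n := by
      calc ‖α ^ n - β ^ n‖ ≤ ‖α ^ n‖ + ‖β ^ n‖ := by
            exact norm_sub_le _ _
        _ = ‖α‖ ^ n + ‖β‖ ^ n := by rw [norm_pow, norm_pow]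
        _ ≤ 2 * ‖α‖ ^ n := by
            have : ‖β‖ ^ n ≤ ‖α‖ ^ n :=
              pow_le_pow_left₀ (norm_nonneg β) habs n
            linarith
    have h4 : ((U n).natAbs : ℝ) = ‖((U n : ℤ) : ℂ)‖ := by
      rw [Complex.norm_intCast]
      rw [Nat.cast_natAbs]
      simp
    rw [h4]
    linarith
  set S := Finset.univ.filter (fun i => n - 1 ≤ m i) with hS
  by_cases hSne : S.Nonempty
  · -- product bound
    have hfact : ∀ i : Fin k, 2 * ((m i : ℝ) / Real.exp 1) ^ (m i) ≤ (Nat.factorial (m i) : ℝ) := by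
      intro i
      have hmi : 1 ≤ m i := le_of_lt (hm1 i)
      have h := two_pow_le_factorial_mul_exp (m i) hmi
      have hepos : (0:ℝ) < Real.exp 1 ^ (m i) := by positivity
      rw [div_pow, ← mul_div_assoc, div_le_iff₀ hepos]
      linarith
    have hprodpos : ∀ i ∈ S, (0:ℝ) < 2 * ((m i : ℝ) / Real.exp 1) ^ (m i) := by
      intro i _
      have : (0:ℝ) < (m i : ℝ) := by exact_mod_cast Nat.pos_of_ne_zero (by have := hm1 i; omega)
      positivity
    have key : ∏ i ∈ S, (2 * ((m i : ℝ) / Real.exp 1) ^ (m i)) ≤ 2 * ‖α‖ ^ n := by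
      calc ∏ i ∈ S, (2 * ((m i : ℝ) / Real.exp 1) ^ (m i))
          ≤ ∏ i ∈ S, (Nat.factorial (m i) : ℝ) := by
            refine Finset.prod_le_prod (fun i hi => le_of_lt (hprodpos i hi)) ?_
            exact fun i _ => hfact i
        _ ≤ ∏ i, (Nat.factorial (m i) : ℝ) := by
            have : (∏ i ∈ S, Nat.factorial (m i)) ≤ ∏ i, Nat.factorial (m i) :=
              Finset.prod_le_prod_of_subset_of_one_le' (Finset.subset_univ S)
                (fun i _ _ => Nat.one_le_iff_ne_zero.mpr (Nat.factorial_ne_zero _))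
            calc (∏ i ∈ S, (Nat.factorial (m i) : ℝ)) = ((∏ i ∈ S, Nat.factorial (m i) : ℕ) : ℝ) := by
                  push_cast; ring
              _ ≤ ((∏ i, Nat.factorial (m i) : ℕ) : ℝ) := by exact_mod_cast this
              _ = ∏ i, (Nat.factorial (m i) : ℝ) := by push_cast; ring
        _ = ((U n).natAbs : ℝ) := by rw [hfac]; push_cast; ring
        _ ≤ 2 * ‖α‖ ^ n := hUbound
    have hPpos : (0:ℝ) < ∏ i ∈ S, (2 * ((m i : ℝ) / Real.exp 1) ^ (m i)) :=
      Finset.prod_pos hprodpos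
    have hlog : Real.log (∏ i ∈ S, (2 * ((m i : ℝ) / Real.exp 1) ^ (m i))) ≤
        Real.log (2 * ‖α‖ ^ n) := Real.log_le_log hPpos key
    have hlogL : Real.log (∏ i ∈ S, (2 * ((m i : ℝ) / Real.exp 1) ^ (m i))) =
        ∑ i ∈ S, (Real.log 2 + (m i : ℝ) * (Real.log (m i) - 1)) := by
      rw [Real.log_prod (fun i hi => ne_of_gt (hprodpos i hi))]
      refine Finset.sum_congr rfl (fun i _ => ?_)
      have hmi : (0:ℝ) < (m i : ℝ) := by exact_mod_cast Nat.pos_of_ne_zero (by have := hm1 i; omega)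
      rw [Real.log_mul two_ne_zero (by positivity), Real.log_pow,
        Real.log_div (ne_of_gt hmi) (Real.exp_ne_zero 1), Real.log_exp]
    have hlogR : Real.log (2 * ‖α‖ ^ n) =
        Real.log 2 + n * Real.log ‖α‖ := by
      have hαpos : (0:ℝ) < ‖α‖ := lt_of_lt_of_le one_pos habsα
      rw [Real.log_mul two_ne_zero (by positivity), Real.log_pow]
    rw [hlogL, hlogR] at hlog
    rw [Finset.sum_add_distrib, Finset.sum_const, nsmul_eq_mul] at hlog
    have hcard : (1:ℝ) ≤ (S.card : ℝ) := by
      exact_mod_cast Finset.card_pos.mpr hSne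
    have hlog2 : (0:ℝ) ≤ Real.log 2 := Real.log_nonneg one_le_two
    nlinarith
  · rw [Finset.not_nonempty_iff_eq_empty] at hSne
    rw [hSne, Finset.sum_empty]
    exact mul_nonneg (Nat.cast_nonneg n) (Real.log_nonneg habsα)
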